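/- Let V be a finite-dimensional vector space over ℂ with a nondegenerate symmetric bilinear form b, let s ≥ 1, and let α₁,…,α_s ∈ V satisfy b(αᵢ,αⱼ) = δᵢⱼ (an orthonormal family). Let c_α : V^{⊗2s} → V^{⊗s} be the contraction applying the functional b(·, αᵢ) to the (s+i)-th tensor factor for each i = 1,…,s and the identity to the first s factors. Then for a perfect matching M of {1,…,2s}: (i) if M contains a block {i,j} with both i,j ∈ {s+1,…,2s}, then c_α(T_M) = 0; and (ii) if M = {{i, s+σ(i)} : 1 ≤ i ≤ s} for a permutation σ of {1,…,s}, then c_α(T_M) = α_{σ(1)} ⊗ ⋯ ⊗ α_{σ(s)}. -/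

import Mathlib

open scoped TensorProduct

/-- A perfect matching of `{1,…,m}`, encoded as a fixed-point-free involution of `Fin m`:
the blocks of the matching are the pairs `{i, σ i}`. -/
abbrev PerfectMatching (m : ℕ) : Type :=
  {σ : Equiv.Perm (Fin m) // ∀ i, σ (σ i) = i ∧ σ i ≠ i}

/-- The tensor `T_M ∈ V^{⊗2s}` attached to a perfect matching `M` (given as a fixed-point-free
involution `σ` of `Fin (2*s)`): a copy of the Casimir element `t = ∑ₖ eₖ ⊗ fₖ` of the bilinear
form (where `(eₖ)`, `(fₖ)` are dual bases) is placed in the pair of slots `{i, σ i}` for each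
block of `M`, the factor `e` going to the smaller slot and `f` to the larger one. -/
noncomputable def matchingTensor {V : Type*} [AddCommGroup V] [Module ℂ V]
    {ι : Type*} [Fintype ι] [DecidableEq ι] (e f : ι → V) {s : ℕ}
    (σ : Equiv.Perm (Fin (2 * s))) : ⨂[ℂ] _ : Fin (2 * s), V :=
  ∑ h : Fin (2 * s) → ι,
    if h ∘ ⇑σ = h then
      PiTensorProduct.tprod ℂ (fun i => if i < σ i then e (h i) else f (h i))
    else 0

/-- The contraction `V^{⊗2s} → V^{⊗s}` which applies the linear functional `φ i` to the
`(s+i)`-th tensor factor (for `i = 1,…,s`) and the identity to the first `s` factors: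
on pure tensors, `v₁ ⊗ ⋯ ⊗ v_{2s} ↦ (Π_i φ i (v_{s+i})) • v₁ ⊗ ⋯ ⊗ v_s`. -/
noncomputable def halfContraction {V : Type*} [AddCommGroup V] [Module ℂ V] {s : ℕ}
    (φ : Fin s → (V →ₗ[ℂ] ℂ)) :
    (⨂[ℂ] _ : Fin (2 * s), V) →ₗ[ℂ] ⨂[ℂ] _ : Fin s, V :=
  (TensorProduct.rid ℂ _).toLinearMap
    ∘ₗ TensorProduct.map LinearMap.id
        (PiTensorProduct.lift ((MultilinearMap.mkPiAlgebra ℂ (Fin s) ℂ).compLinearMap φ))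
    ∘ₗ (PiTensorProduct.tmulEquiv ℂ V).symm.toLinearMap
    ∘ₗ (PiTensorProduct.reindex ℂ (fun _ : Fin (2 * s) => V)
          ((finCongr (by ring : 2 * s = s + s)).trans finSumFinEquiv.symm)).toLinearMap

namespace VoisinAux

/-- inclusion of first half -/
def emb1 {s : ℕ} (j : Fin s) : Fin (2 * s) := ⟨j, by omega⟩
/-- inclusion of second half -/
def emb2 {s : ℕ} (i : Fin s) : Fin (2 * s) := ⟨s + i, by omega⟩

/-- the vector placed in slot `j` of the matching tensor -/
def gv {V ι : Type*} {s : ℕ} (e f : ι → V) (σ : Equiv.Perm (Fin (2 * s)))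
    (h : Fin (2 * s) → ι) (j : Fin (2 * s)) : V :=
  if j < σ j then e (h j) else f (h j)

lemma halfContraction_tprod {V : Type*} [AddCommGroup V] [Module ℂ V] {s : ℕ}
    (φ : Fin s → (V →ₗ[ℂ] ℂ)) (v : Fin (2 * s) → V) :
    halfContraction φ (PiTensorProduct.tprod ℂ v)
      = (∏ i : Fin s, φ i (v (emb2 i))) •
          PiTensorProduct.tprod ℂ (fun j : Fin s => v (emb1 j)) := by
  simp only [halfContraction, LinearMap.comp_apply, LinearEquiv.coe_toLinearMap,
    PiTensorProduct.reindex_tprod]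
  rw [show ((fun i => v (((finCongr (by ring : 2*s = s+s)).trans finSumFinEquiv.symm).symm i)) :
      Fin s ⊕ Fin s → V) = Sum.elim (fun j : Fin s => v (emb1 j))
        (fun i : Fin s => v (emb2 i)) by
    ext x
    cases x with
    | inl i => congr 1
    | inr i => congr 1]
  rw [PiTensorProduct.tmulEquiv_symm_apply]
  simp [TensorProduct.smul_tmul, MultilinearMap.mkPiAlgebra_apply, TensorProduct.tmul_smul]

lemma halfContraction_matchingTensor {V : Type*} [AddCommGroup V] [Module ℂ V]
    {ι : Type*} [Fintype ι] [DecidableEq ι] (e f : ι → V) {s : ℕ}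
    (φ : Fin s → (V →ₗ[ℂ] ℂ)) (σ : Equiv.Perm (Fin (2 * s))) :
    halfContraction φ (matchingTensor e f σ)
      = ∑ h : Fin (2 * s) → ι,
          if h ∘ ⇑σ = h then
            (∏ i : Fin s, φ i (gv e f σ h (emb2 i))) •
              PiTensorProduct.tprod ℂ (fun j : Fin s => gv e f σ h (emb1 j))
          else 0 := by
  rw [matchingTensor, map_sum]
  refine Finset.sum_congr rfl fun h _ => ?_
  split_ifs
  · rw [halfContraction_tprod]; rfl
  · rw [map_zero]

section
variable {V : Type*} [AddCommGroup V] [Module ℂ V]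
    (B : LinearMap.BilinForm ℂ V)
    (hBsymm : ∀ x y, B x y = B y x)
    (hBnd : B.Nondegenerate)
    {ι : Type*} [Fintype ι] [DecidableEq ι]
    (e f : Module.Basis ι ℂ V)
    (hdual : ∀ k l, B (e k) (f l) = if k = l then 1 else 0)

include hBsymm hBnd hdual

lemma expand_e (w : V) : ∑ m, (B (f m) w) • e m = w := by
  have key : ∀ l, B (∑ m, (B (f m) w) • e m - w) (f l) = 0 := by
    intro l
    simp only [map_sub, map_sum, map_smul, LinearMap.sub_apply, LinearMap.sum_apply,
      LinearMap.smul_apply, hdual, smul_eq_mul]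
    rw [Finset.sum_eq_single l]
    · simp [hBsymm (f l) w]
    · intro b _ hb; simp [hb]
    · simp
  have h0 : B (∑ m, (B (f m) w) • e m - w) = 0 :=
    f.ext (fun i => by rw [key i]; rfl)
  have := hBnd.1 _ (fun y => by rw [h0]; rfl)
  exact sub_eq_zero.mp this

lemma expand_f (w : V) : ∑ m, (B (e m) w) • f m = w := by
  have key : ∀ l, B (∑ m, (B (e m) w) • f m - w) (e l) = 0 := by
    intro l
    simp only [map_sub, map_sum, map_smul, LinearMap.sub_apply, LinearMap.sum_apply,
      LinearMap.smul_apply, smul_eq_mul]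
    have : ∀ m, B (f m) (e l) = if l = m then 1 else 0 := by
      intro m; rw [hBsymm, hdual]
    simp only [this]
    rw [Finset.sum_eq_single l]
    · simp [hBsymm (e l) w]
    · intro b _ hb; simp [Ne.symm hb]
    · simp
  have h0 : B (∑ m, (B (e m) w) • f m - w) = 0 :=
    e.ext (fun i => by rw [key i]; rfl)
  have := hBnd.1 _ (fun y => by rw [h0]; rfl)
  exact sub_eq_zero.mp this

lemma sum_ef (x y : V) : ∑ m, (B (e m) x) * (B (f m) y) = B x y := by
  conv_rhs => rw [← expand_f B hBsymm hBnd e f hdual x]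
  simp [mul_comm]

lemma sum_fe (x y : V) : ∑ m, (B (f m) x) * (B (e m) y) = B x y := by
  conv_rhs => rw [← expand_e B hBsymm hBnd e f hdual x]
  simp

end

end VoisinAux

open VoisinAux in
/-- Let `V` be a finite-dimensional complex vector space with a nondegenerate symmetric
bilinear form `b`, `s ≥ 1`, and `α₁,…,α_s ∈ V` an orthonormal family. Let
`c_α : V^{⊗2s} → V^{⊗s}` be the contraction applying `b(·, αᵢ)` to the `(s+i)`-th tensor
factor and the identity to the first `s` factors. Then for a perfect matching `M` of
`{1,…,2s}`: (i) if `M` has a block entirely contained in the last `s` indices, then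
`c_α (T_M) = 0`; and (ii) if `M = {{i, s+σ(i)}}` for a permutation `σ` of `{1,…,s}`, then
`c_α (T_M) = α_{σ(1)} ⊗ ⋯ ⊗ α_{σ(s)}`. -/
theorem halfContraction_matchingTensor_orthonormal
    {V : Type*} [AddCommGroup V] [Module ℂ V] [FiniteDimensional ℂ V]
    (B : LinearMap.BilinForm ℂ V)
    (hBsymm : ∀ x y, B x y = B y x)
    (hBnd : B.Nondegenerate)
    {ι : Type*} [Fintype ι] [DecidableEq ι]
    (e f : Module.Basis ι ℂ V)
    (hdual : ∀ k l, B (e k) (f l) = if k = l then 1 else 0)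
    (s : ℕ) (hs : 1 ≤ s)
    (α : Fin s → V) (hortho : ∀ i j, B (α i) (α j) = if i = j then 1 else 0)
    (M : PerfectMatching (2 * s)) :
    ((∃ i : Fin (2 * s), s ≤ (i : ℕ) ∧ s ≤ ((M.1 i : Fin (2 * s)) : ℕ)) →
        halfContraction (fun i => B.flip (α i)) (matchingTensor (⇑e) (⇑f) M.1) = 0)
    ∧ (∀ σ : Equiv.Perm (Fin s),
        (∀ i : Fin s, ((M.1 (Fin.castLE (by omega) i) : Fin (2 * s)) : ℕ) = s + σ i) →
        halfContraction (fun i => B.flip (α i)) (matchingTensor (⇑e) (⇑f) M.1)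
          = PiTensorProduct.tprod ℂ (fun i => α (σ i))) := by
  classical
  set σ2 : Equiv.Perm (Fin (2 * s)) := M.1 with hσ2
  have hinv : ∀ j, σ2 (σ2 j) = j := fun j => (M.2 j).1
  have hne : ∀ j, σ2 j ≠ j := fun j => (M.2 j).2
  set φ : Fin s → (V →ₗ[ℂ] ℂ) := fun i => B.flip (α i) with hφ
  have hφval : ∀ i x, φ i x = B x (α i) := fun i x => rfl
  constructor
  · rintro ⟨i, hi, hsi⟩
    rw [halfContraction_matchingTensor]
    have hV : Nontrivial V := by
      refine ⟨α ⟨0, hs⟩, 0, fun h0 => ?_⟩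
      have h1 := hortho ⟨0, hs⟩ ⟨0, hs⟩
      rw [h0] at h1
      simp at h1
    have hι : Nonempty ι := e.index_nonempty
    set i₀ : ι := Classical.arbitrary ι with hi₀
    have hσilt : ((σ2 i : Fin (2 * s)) : ℕ) < 2 * s := (σ2 i).isLt
    set a : Fin s := ⟨(i : ℕ) - s, by omega⟩ with ha
    set b : Fin s := ⟨((σ2 i : Fin (2 * s)) : ℕ) - s, by omega⟩ with hb
    have hea : emb2 a = i := Fin.ext (by simp only [emb2, ha]; omega)
    have heb : emb2 b = σ2 i := Fin.ext (by
      show s + (((σ2 i : Fin (2 * s)) : ℕ) - s) = ((σ2 i : Fin (2 * s)) : ℕ)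
      have : ((σ2 i : Fin (2 * s)) : ℕ) = ((M.1 i : Fin (2 * s)) : ℕ) := rfl
      omega)
    have hab : a ≠ b := by
      intro hab'
      exact hne i (by rw [← heb, ← hab', hea])
    have hines : i ≠ σ2 i := fun h' => hne i h'.symm
    set upd2 : (Fin (2 * s) → ι) → ι → (Fin (2 * s) → ι) :=
      fun g m => Function.update (Function.update g i m) (σ2 i) m with hupd
    have hupd_i : ∀ g m, upd2 g m i = m := by
      intro g m
      rw [hupd]
      simp only
      rw [Function.update_of_ne hines, Function.update_self]
    have hupd_si : ∀ g m, upd2 g m (σ2 i) = m := by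
      intro g m
      rw [hupd]
      simp only
      rw [Function.update_self]
    have hupd_other : ∀ g m x, x ≠ i → x ≠ σ2 i → upd2 g m x = g x := by
      intro g m x hx1 hx2
      rw [hupd]
      simp only
      rw [Function.update_of_ne hx2, Function.update_of_ne hx1]
    have hblock : ∀ x : Fin (2 * s), x ≠ i → x ≠ σ2 i → σ2 x ≠ i ∧ σ2 x ≠ σ2 i := by
      intro x hx1 hx2
      constructor
      · intro h'
        exact hx2 (by rw [← h', hinv])
      · intro h'
        exact hx1 (σ2.injective h')
    set R : (Fin (2 * s) → ι) → Prop :=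
      fun g => g i = i₀ ∧ g (σ2 i) = i₀ ∧ g ∘ ⇑σ2 = g with hR
    have hPupd : ∀ g m, g ∘ ⇑σ2 = g →
        (upd2 g m) ∘ ⇑σ2 = upd2 g m := by
      intro g m hg
      funext x
      simp only [Function.comp_apply]
      by_cases hx1 : x = i
      · rw [hx1, hupd_si, hupd_i]
      · by_cases hx2 : x = σ2 i
        · rw [hx2, hinv, hupd_si, hupd_i]
        · obtain ⟨hs1, hs2⟩ := hblock x hx1 hx2
          rw [hupd_other g m _ hs1 hs2, hupd_other g m _ hx1 hx2,
            ← Function.comp_apply (f := g) (g := ⇑σ2), hg]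
    rw [← Finset.sum_filter]
    rw [Finset.sum_nbij' (i := fun h => (upd2 h i₀, h i)) (j := fun p => upd2 p.1 p.2)
        (t := (Finset.filter R Finset.univ) ×ˢ (Finset.univ : Finset ι))
        (g := fun p => (∏ i' : Fin s, φ i' (gv (⇑e) (⇑f) σ2 (upd2 p.1 p.2) (emb2 i'))) •
              PiTensorProduct.tprod ℂ
                (fun j : Fin s => gv (⇑e) (⇑f) σ2 (upd2 p.1 p.2) (emb1 j)))
        (hi := ?_) (hj := ?_) (left_neg := ?_) (right_neg := ?_) (h := ?_)]
    · rw [Finset.sum_product]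
      refine Finset.sum_eq_zero fun g hg => ?_
      simp only [Finset.mem_filter, Finset.mem_univ, true_and, hR] at hg
      obtain ⟨hg1, hg2, hg3⟩ := hg
      -- the tprod part does not depend on m
      have hT : ∀ m : ι, (fun j : Fin s => gv (⇑e) (⇑f) σ2 (upd2 g m) (emb1 j))
          = fun j : Fin s => gv (⇑e) (⇑f) σ2 g (emb1 j) := by
        intro m
        funext j
        have hj1 : emb1 j ≠ i := by
          intro h'
          have : (j : ℕ) = (i : ℕ) := by rw [← h']; rfl
          omega
        have hj2 : emb1 j ≠ σ2 i := by
          intro h'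
          have : (j : ℕ) = ((σ2 i : Fin (2 * s)) : ℕ) := by rw [← h']; rfl
          omega
        rw [gv, gv, hupd_other g m _ hj1 hj2]
      -- split the product
      have hC : ∀ m : ι, (∏ i' : Fin s, φ i' (gv (⇑e) (⇑f) σ2 (upd2 g m) (emb2 i')))
          = (φ a (gv (⇑e) (⇑f) σ2 (upd2 g m) (emb2 a))
              * φ b (gv (⇑e) (⇑f) σ2 (upd2 g m) (emb2 b)))
            * ∏ i' ∈ (Finset.univ.erase a).erase b,
                φ i' (gv (⇑e) (⇑f) σ2 g (emb2 i')) := by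
        intro m
        rw [← Finset.mul_prod_erase Finset.univ _ (Finset.mem_univ a),
          ← Finset.mul_prod_erase (Finset.univ.erase a) _
            (Finset.mem_erase.mpr ⟨Ne.symm hab, Finset.mem_univ b⟩), mul_assoc]
        congr 1
        congr 1
        refine Finset.prod_congr rfl fun i' hi' => ?_
        rw [Finset.mem_erase, Finset.mem_erase] at hi'
        have hii1 : emb2 i' ≠ i := by
          intro h'
          rw [← hea] at h'
          have hval : s + (i' : ℕ) = s + (a : ℕ) := congrArg Fin.val h'
          exact hi'.2.1 (Fin.ext (by omega))
        have hii2 : emb2 i' ≠ σ2 i := by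
          intro h'
          rw [← heb] at h'
          have hval : s + (i' : ℕ) = s + (b : ℕ) := congrArg Fin.val h'
          exact hi'.1 (Fin.ext (by omega))
        rw [gv, gv, hupd_other g m _ hii1 hii2]
      simp only [hT, hC]
      rw [← Finset.sum_smul, ← Finset.sum_mul]
      have hzero : (∑ m : ι, φ a (gv (⇑e) (⇑f) σ2 (upd2 g m) (emb2 a))
          * φ b (gv (⇑e) (⇑f) σ2 (upd2 g m) (emb2 b))) = 0 := by
        have hva : ∀ m, gv (⇑e) (⇑f) σ2 (upd2 g m) (emb2 a)
            = if i < σ2 i then e m else f m := by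
          intro m
          rw [gv, hea, hupd_i]
        have hvb : ∀ m, gv (⇑e) (⇑f) σ2 (upd2 g m) (emb2 b)
            = if σ2 i < i then e m else f m := by
          intro m
          rw [gv, heb, hupd_si]
          congr 2
          rw [hinv]
        simp only [hva, hvb, hφval]
        rcases lt_or_gt_of_ne hines with hlt | hgt
        · rw [show (∑ m : ι, B (if i < σ2 i then e m else f m) (α a)
              * B (if σ2 i < i then e m else f m) (α b))
              = ∑ m : ι, B (e m) (α a) * B (f m) (α b) from Finset.sum_congr rfl
                fun m _ => by rw [if_pos hlt, if_neg (not_lt.mpr (le_of_lt hlt))]]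
          rw [sum_ef B hBsymm hBnd e f hdual, hortho, if_neg hab]
        · rw [show (∑ m : ι, B (if i < σ2 i then e m else f m) (α a)
              * B (if σ2 i < i then e m else f m) (α b))
              = ∑ m : ι, B (f m) (α a) * B (e m) (α b) from Finset.sum_congr rfl
                fun m _ => by rw [if_neg (not_lt.mpr (le_of_lt hgt)), if_pos hgt]]
          rw [sum_fe B hBsymm hBnd e f hdual, hortho, if_neg hab]
      rw [hzero, zero_mul, zero_smul]
    · -- hi : forward map lands in target
      intro h hh
      simp only [Finset.mem_filter, Finset.mem_univ, true_and] at hh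
      simp only [Finset.mem_product, Finset.mem_filter, Finset.mem_univ, true_and, hR,
        and_true]
      exact ⟨hupd_i h i₀, hupd_si h i₀, hPupd h i₀ hh⟩
    · -- hj : backward map lands in filter P
      rintro ⟨g, m⟩ hp
      simp only [Finset.mem_product, Finset.mem_filter, Finset.mem_univ, true_and, hR,
        and_true] at hp
      simp only [Finset.mem_filter, Finset.mem_univ, true_and]
      exact hPupd g m hp.2.2
    · -- left_inv
      intro h hh
      simp only [Finset.mem_filter, Finset.mem_univ, true_and] at hh
      have hQ : h (σ2 i) = h i := by
        conv_lhs => rw [← Function.comp_apply (f := h) (g := ⇑σ2), hh]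
      show upd2 (upd2 h i₀) (h i) = h
      funext x
      by_cases hx1 : x = i
      · rw [hx1, hupd_i]
      · by_cases hx2 : x = σ2 i
        · rw [hx2, hupd_si, hQ]
        · rw [hupd_other _ _ _ hx1 hx2, hupd_other _ _ _ hx1 hx2]
    · -- right_inv
      rintro ⟨g, m⟩ hp
      simp only [Finset.mem_product, Finset.mem_filter, Finset.mem_univ, true_and, hR,
        and_true] at hp
      have h1 : upd2 g m i = m := hupd_i g m
      show (upd2 (upd2 g m) i₀, upd2 g m i) = (g, m)
      refine Prod.ext ?_ h1
      show upd2 (upd2 g m) i₀ = g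
      funext x
      by_cases hx1 : x = i
      · rw [hx1, hupd_i]
        exact hp.1.symm
      · by_cases hx2 : x = σ2 i
        · rw [hx2, hupd_si]
          exact hp.2.1.symm
        · rw [hupd_other _ _ _ hx1 hx2, hupd_other _ _ _ hx1 hx2]

    · -- h : summands agree
      intro h hh
      simp only [Finset.mem_filter, Finset.mem_univ, true_and] at hh
      have hQ : h (σ2 i) = h i := by
        conv_lhs => rw [← Function.comp_apply (f := h) (g := ⇑σ2), hh]
      have hrec : upd2 (upd2 h i₀) (h i) = h := by
        funext x
        by_cases hx1 : x = i
        · rw [hx1, hupd_i]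
        · by_cases hx2 : x = σ2 i
          · rw [hx2, hupd_si, hQ]
          · rw [hupd_other _ _ _ hx1 hx2, hupd_other _ _ _ hx1 hx2]
      dsimp only
      rw [hrec]
  · intro τ hτ
    rw [halfContraction_matchingTensor]
    have hσfst : ∀ j : Fin s, σ2 (emb1 j) = emb2 (τ j) := fun j => Fin.ext (hτ j)
    have hσsnd : ∀ i : Fin s, σ2 (emb2 i) = emb1 (τ.symm i) := by
      intro i
      have h1 : σ2 (emb1 (τ.symm i)) = emb2 i := by rw [hσfst]; simp
      rw [← h1, hinv]
    have hlt1 : ∀ j : Fin s, emb1 j < σ2 (emb1 j) := by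
      intro j; rw [hσfst]; simp only [Fin.lt_def, emb1, emb2]; omega
    have hnlt2 : ∀ i : Fin s, ¬ (emb2 i < σ2 (emb2 i)) := by
      intro i; rw [hσsnd]; simp only [Fin.lt_def, emb1, emb2, not_lt]
      omega
    have hsecond : ∀ x : Fin (2 * s), ¬ ((x : ℕ) < s) → ((σ2 x : Fin (2*s)) : ℕ) < s := by
      intro x hx
      have hxe : x = emb2 ⟨(x : ℕ) - s, by omega⟩ := Fin.ext (by simp [emb2]; omega)
      rw [hxe, hσsnd]
      exact (τ.symm _).isLt
    set H : (Fin s → ι) → (Fin (2 * s) → ι) := fun k x =>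
      if hx : (x : ℕ) < s then k ⟨x, hx⟩ else k ⟨(σ2 x : ℕ), hsecond x hx⟩ with hH
    rw [← Finset.sum_filter]
    rw [Finset.sum_nbij' (i := fun h => (fun j : Fin s => h (emb1 j))) (j := H)
      (g := fun k => (∏ i : Fin s, φ i (gv (⇑e) (⇑f) σ2 (H k) (emb2 i))) •
              PiTensorProduct.tprod ℂ (fun j : Fin s => gv (⇑e) (⇑f) σ2 (H k) (emb1 j)))
      (hi := fun h _ => Finset.mem_univ _)
      (hj := ?_) (left_neg := ?_) (right_neg := ?_) (h := ?_)]
    · -- main computation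
      have hgv2 : ∀ (k : Fin s → ι) (i : Fin s),
          gv (⇑e) (⇑f) σ2 (H k) (emb2 i) = f (k (τ.symm i)) := by
        intro k i
        rw [gv, if_neg (hnlt2 i), hH]
        simp only
        rw [dif_neg (by simp [emb2])]
        exact congrArg f (congrArg k (Fin.ext
          (show ((σ2 (emb2 i) : Fin (2*s)) : ℕ) = ((τ.symm i : Fin s) : ℕ) by
            rw [hσsnd]; rfl)))
      have hgv1 : ∀ (k : Fin s → ι) (j : Fin s),
          gv (⇑e) (⇑f) σ2 (H k) (emb1 j) = e (k j) := by
        intro k j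
        rw [gv, if_pos (hlt1 j), hH]
        simp only
        rw [dif_pos (by simp [emb1])]
        exact congrArg e (congrArg k (Fin.ext rfl))
      simp only [hgv2, hgv1, hφval]
      have hprod : ∀ k : Fin s → ι,
          (∏ i : Fin s, B (f (k (τ.symm i))) (α i))
            = ∏ j : Fin s, B (f (k j)) (α (τ j)) := by
        intro k
        rw [← Equiv.prod_comp τ (fun i => B (f (k (τ.symm i))) (α i))]
        simp
      simp only [hprod]
      have hsm : ∀ k : Fin s → ι,
          (∏ j : Fin s, B (f (k j)) (α (τ j))) •
              PiTensorProduct.tprod ℂ (fun j : Fin s => e (k j))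
            = PiTensorProduct.tprod ℂ
                (fun j : Fin s => (B (f (k j)) (α (τ j))) • e (k j)) := by
        intro k
        rw [MultilinearMap.map_smul_univ]
      simp only [hsm]
      calc ∑ x : Fin s → ι,
            (PiTensorProduct.tprod ℂ) (fun j : Fin s => (B (f (x j))) (α (τ j)) • e (x j))
          = (PiTensorProduct.tprod ℂ)
              (fun j : Fin s => ∑ m, (B (f m)) (α (τ j)) • e m) :=
            (MultilinearMap.map_sum (PiTensorProduct.tprod ℂ)
              (fun (j : Fin s) (m : ι) => (B (f m)) (α (τ j)) • e m)).symm
        _ = _ := by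
            congr 1
            funext j
            exact expand_e B hBsymm hBnd e f hdual (α (τ j))
    · -- hj : H k satisfies the constraint
      intro k _
      simp only [Finset.mem_filter, Finset.mem_univ, true_and]
      funext x
      simp only [Function.comp_apply]
      by_cases hx : (x : ℕ) < s
      · have hxe : x = emb1 ⟨(x : ℕ), hx⟩ := Fin.ext rfl
        rw [hH]
        simp only
        rw [dif_neg (by rw [hxe, hσfst]; simp [emb2]), dif_pos hx]
        exact congrArg k (Fin.ext
          (show ((σ2 (σ2 x) : Fin (2*s)) : ℕ) = ((x : Fin (2*s)) : ℕ) by rw [hinv]))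
      · have h2 : ((σ2 x : Fin (2*s)) : ℕ) < s := hsecond x hx
        rw [hH]
        simp only
        rw [dif_pos h2, dif_neg hx]
    · -- left_inv
      intro h hh
      simp only [Finset.mem_filter, Finset.mem_univ, true_and] at hh
      funext x
      rw [hH]
      simp only
      by_cases hx : (x : ℕ) < s
      · rw [dif_pos hx]
        exact congrArg h (Fin.ext rfl)
      · rw [dif_neg hx]
        have h3 : h (emb1 ⟨(σ2 x : ℕ), hsecond x hx⟩) = h (σ2 x) :=
          congrArg h (Fin.ext rfl)
        rw [h3, ← Function.comp_apply (f := h) (g := ⇑σ2), hh]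
    · -- right_inv
      intro k _
      funext j
      rw [hH]
      simp only
      rw [dif_pos (by simp [emb1])]
      exact congrArg k (Fin.ext rfl)
    · -- h : terms agree
      intro h hh
      simp only [Finset.mem_filter, Finset.mem_univ, true_and] at hh
      have hHh : H (fun j : Fin s => h (emb1 j)) = h := by
        funext x
        rw [hH]
        simp only
        by_cases hx : (x : ℕ) < s
        · rw [dif_pos hx]
          exact congrArg h (Fin.ext rfl)
        · rw [dif_neg hx]
          have h3 : h (emb1 ⟨(σ2 x : ℕ), hsecond x hx⟩) = h (σ2 x) :=
            congrArg h (Fin.ext rfl)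
          rw [h3, ← Function.comp_apply (f := h) (g := ⇑σ2), hh]
      rw [hHh]
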